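/- Let n ≥ 2, let R be any 4-tensor on ℝⁿ, and let B be a real symmetric trace-free n×n matrix. Then |Σ_{i,j,k,l,h} R_{ijkl} R_{ijkh} B_{hl}| ≤ √((n−1)/n) · ‖B‖ · ‖R‖². -/

import Mathlib

lemma quad_bound (n : ℕ) (hn : 1 ≤ n) (B : Matrix (Fin n) (Fin n) ℝ)
    (htr : B.trace = 0) (x : Fin n → ℝ) :
    |∑ l, ∑ h, x l * x h * B h l| ≤
      Real.sqrt (((n : ℝ) - 1) / (n : ℝ)) * Real.sqrt (∑ i, ∑ j, (B i j) ^ 2) *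
        (∑ i, x i ^ 2) := by
  have hn' : (0 : ℝ) < n := by positivity
  set S : ℝ := ∑ i, x i ^ 2 with hSdef
  have hS0 : 0 ≤ S := Finset.sum_nonneg fun i _ => sq_nonneg _
  set c : ℝ := S / n with hc
  set g : Fin n × Fin n → ℝ := fun p => x p.1 * x p.2 - if p.1 = p.2 then c else 0 with hg
  set f : Fin n × Fin n → ℝ := fun p => B p.2 p.1 with hf
  have key : ∑ p : Fin n × Fin n, f p * g p = ∑ l, ∑ h, x l * x h * B h l := by
    have e : ∀ p : Fin n × Fin n, f p * g p
        = x p.1 * x p.2 * B p.2 p.1 - (if p.1 = p.2 then c * B p.2 p.1 else 0) := by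
      intro p; by_cases h : p.1 = p.2 <;> simp [hf, hg, h] <;> ring
    rw [Finset.sum_congr rfl fun p _ => e p, Finset.sum_sub_distrib]
    have h2 : ∑ p : Fin n × Fin n, (if p.1 = p.2 then c * B p.2 p.1 else 0)
        = c * B.trace := by
      rw [Fintype.sum_prod_type]
      simp [Matrix.trace, Matrix.diag, Finset.mul_sum]
    rw [h2, htr, mul_zero, sub_zero, Fintype.sum_prod_type]
  have hf2 : ∑ p : Fin n × Fin n, f p ^ 2 = ∑ i, ∑ j, (B i j) ^ 2 := by
    rw [Fintype.sum_prod_type]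
    exact Finset.sum_comm
  have hg2 : ∑ p : Fin n × Fin n, g p ^ 2 = S ^ 2 * (((n : ℝ) - 1) / n) := by
    have e : ∀ p : Fin n × Fin n, g p ^ 2
        = x p.1 ^ 2 * x p.2 ^ 2 - (if p.1 = p.2 then 2 * c * x p.1 ^ 2 - c ^ 2 else 0) := by
      intro p; by_cases h : p.1 = p.2 <;> simp [hg, h] <;> ring
    rw [Finset.sum_congr rfl fun p _ => e p, Finset.sum_sub_distrib]
    have h1 : ∑ p : Fin n × Fin n, x p.1 ^ 2 * x p.2 ^ 2 = S * S := by
      rw [Fintype.sum_prod_type]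
      exact (Finset.sum_mul_sum Finset.univ Finset.univ (fun l => x l ^ 2) (fun h => x h ^ 2)).symm
    have h2 : ∑ p : Fin n × Fin n, (if p.1 = p.2 then 2 * c * x p.1 ^ 2 - c ^ 2 else 0)
        = 2 * c * S - n * c ^ 2 := by
      rw [Fintype.sum_prod_type]
      simp only [Finset.sum_ite_eq, Finset.mem_univ, if_true]
      rw [Finset.sum_sub_distrib, ← Finset.mul_sum]
      simp [mul_comm]
      exact Or.inl hSdef.symm
    rw [h1, h2, hc]
    field_simp
    ring
  have cs := Finset.sum_mul_sq_le_sq_mul_sq Finset.univ f g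
  have habs : |∑ p : Fin n × Fin n, f p * g p|
      ≤ Real.sqrt ((∑ p : Fin n × Fin n, f p ^ 2) * ∑ p : Fin n × Fin n, g p ^ 2) := by
    rw [← Real.sqrt_sq_eq_abs]
    exact Real.sqrt_le_sqrt cs
  rw [key] at habs
  refine habs.trans ?_
  rw [hf2, hg2, Real.sqrt_mul (by positivity), Real.sqrt_mul (by positivity),
    Real.sqrt_sq hS0]
  ring_nf
  exact le_of_eq (by ring)

/-- For any 4-tensor `R` on `ℝⁿ` and any symmetric trace-free matrix `B`:
`|Σ R_{ijkl} R_{ijkh} B_{hl}| ≤ √((n−1)/n) ‖B‖ ‖R‖²`. -/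
theorem stmt_3 (n : ℕ) (hn : 2 ≤ n)
    (R : Fin n → Fin n → Fin n → Fin n → ℝ)
    (B : Matrix (Fin n) (Fin n) ℝ) (hB : B.IsSymm) (htr : B.trace = 0) :
    |∑ i, ∑ j, ∑ k, ∑ l, ∑ h, R i j k l * R i j k h * B h l| ≤
      Real.sqrt (((n : ℝ) - 1) / (n : ℝ)) *
        Real.sqrt (∑ i, ∑ j, (B i j) ^ 2) *
        (∑ i, ∑ j, ∑ k, ∑ l, (R i j k l) ^ 2) := by
  set C : ℝ := Real.sqrt (((n : ℝ) - 1) / (n : ℝ)) * Real.sqrt (∑ i, ∑ j, (B i j) ^ 2)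
    with hC
  have step : ∀ i j k, |∑ l, ∑ h, R i j k l * R i j k h * B h l|
      ≤ C * ∑ l, R i j k l ^ 2 := fun i j k =>
    quad_bound n (by omega) B htr (R i j k)
  have main : |∑ i, ∑ j, ∑ k, ∑ l, ∑ h, R i j k l * R i j k h * B h l|
      ≤ ∑ i, ∑ j, ∑ k, C * ∑ l, R i j k l ^ 2 := by
    refine (Finset.abs_sum_le_sum_abs _ _).trans (Finset.sum_le_sum fun i _ => ?_)
    refine (Finset.abs_sum_le_sum_abs _ _).trans (Finset.sum_le_sum fun j _ => ?_)
    exact (Finset.abs_sum_le_sum_abs _ _).trans (Finset.sum_le_sum fun k _ => step i j k)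
  refine main.trans (le_of_eq ?_)
  simp only [← Finset.mul_sum]
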